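/- arXiv:2110.10946 — 2 statements merged into one kernel-verified Lean document; each statement's English description precedes it below -/
import Mathlib

section
/- Let f ≥ 1 be an integer and n = 2^(2f+1). If p is a prime with p ≠ 3, p ∣ n⁶ + 1 and p ∤ n² + 1, then p ≡ 1 (mod 12) or p ≡ 11 (mod 12). -/
theorem stmt_4 (f : ℕ) (hf : 1 ≤ f) (p : ℕ) (hp : p.Prime) (hp3 : p ≠ 3)
    (hdvd : (p : ℤ) ∣ ((2 : ℤ) ^ (2 * f + 1)) ^ 6 + 1)
    (hndvd : ¬ (p : ℤ) ∣ ((2 : ℤ) ^ (2 * f + 1)) ^ 2 + 1) :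
    p % 12 = 1 ∨ p % 12 = 11 := by
  left
  haveI : Fact p.Prime := ⟨hp⟩
  have hp2 : p ≠ 2 := by
    rintro rfl
    have h2 : (2 : ℤ) ∣ ((2 : ℤ) ^ (2 * f + 1)) ^ 6 := by
      exact dvd_pow (dvd_pow_self 2 (by omega)) (by norm_num)
    have : (2 : ℤ) ∣ 1 := (dvd_add_right h2).mp (by exact_mod_cast hdvd)
    norm_num at this
  have hplt : 2 < p := lt_of_le_of_ne hp.two_le (Ne.symm hp2)
  haveI : Fact (2 < p) := ⟨hplt⟩
  set a : ZMod p := (2 : ZMod p) ^ (2 * f + 1) with ha_def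
  have ha6 : a ^ 6 = -1 := by
    have h0 : ((((2 : ℤ) ^ (2 * f + 1)) ^ 6 + 1 : ℤ) : ZMod p) = 0 :=
      (ZMod.intCast_zmod_eq_zero_iff_dvd _ _).mpr hdvd
    push_cast at h0
    linear_combination h0
  have ha2 : a ^ 2 ≠ -1 := by
    intro h
    apply hndvd
    rw [← ZMod.intCast_zmod_eq_zero_iff_dvd]
    push_cast
    linear_combination h
  have ha12 : a ^ 12 = 1 := by
    have : a ^ 12 = (a ^ 6) ^ 2 := by ring
    rw [this, ha6]; ring
  have hne1 : a ^ 6 ≠ 1 := by rw [ha6]; exact ZMod.neg_one_ne_one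
  have hne4 : a ^ 4 ≠ 1 := by
    intro h
    apply ha2
    have : a ^ 6 = a ^ 4 * a ^ 2 := by ring
    rw [this, h, one_mul] at ha6
    exact ha6
  have hd : orderOf a ∣ 12 := orderOf_dvd_of_pow_eq_one ha12
  have hd6 : ¬ orderOf a ∣ 6 := fun h => hne1 (orderOf_dvd_iff_pow_eq_one.mp h)
  have hd4 : ¬ orderOf a ∣ 4 := fun h => hne4 (orderOf_dvd_iff_pow_eq_one.mp h)
  have h12 : orderOf a = 12 := by
    have hpos : 0 < orderOf a := by
      rcases Nat.eq_zero_or_pos (orderOf a) with h | h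
      · rw [h] at hd; norm_num at hd
      · exact h
    have hle : orderOf a ≤ 12 := Nat.le_of_dvd (by norm_num) hd
    interval_cases (orderOf a) <;> first | rfl | (exfalso; revert hd hd6 hd4; decide)
  have ha0 : a ≠ 0 := by
    intro h
    rw [h] at ha6
    have : (0 : ZMod p) ^ 6 = 0 := by norm_num
    rw [this] at ha6
    exact (neg_ne_zero.mpr one_ne_zero) ha6.symm
  have hcard : a ^ (p - 1) = 1 := ZMod.pow_card_sub_one_eq_one ha0
  have hdvd12 : (12 : ℕ) ∣ p - 1 := h12 ▸ orderOf_dvd_of_pow_eq_one hcard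
  omega
end

section
/- Let p be a prime with p ≡ 2 (mod 3) and m an odd positive integer. If 2^(3m) ≡ −1 (mod p), then 2^(2m) ≡ 1 (mod p). -/
theorem stmt_16 (p : ℕ) (hp : p.Prime) (h3 : p % 3 = 2) (m : ℕ) (hm : Odd m)
    (hmpos : 0 < m) (h : (2 : ℤ) ^ (3 * m) ≡ -1 [ZMOD p]) :
    (2 : ℤ) ^ (2 * m) ≡ 1 [ZMOD p] := by
  haveI : Fact p.Prime := ⟨hp⟩
  have h' : (2 : ZMod p) ^ (3 * m) = -1 := by
    have := (ZMod.intCast_eq_intCast_iff ((2:ℤ)^(3*m)) (-1) p).mpr h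
    push_cast at this
    exact this
  have hne : (2 : ZMod p) ≠ 0 := by
    intro h0
    rw [h0, zero_pow (by positivity)] at h'
    exact absurd h'.symm (neg_ne_zero.mpr one_ne_zero)
  have h6 : (2 : ZMod p) ^ (6 * m) = 1 := by
    have : ((2 : ZMod p) ^ (3 * m)) ^ 2 = 1 := by rw [h']; ring
    rwa [← pow_mul, show 3 * m * 2 = 6 * m by ring] at this
  have hd6 : orderOf (2 : ZMod p) ∣ 6 * m := orderOf_dvd_of_pow_eq_one h6
  have hdp : orderOf (2 : ZMod p) ∣ p - 1 := ZMod.orderOf_dvd_card_sub_one hne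
  have h3nd : ¬ (3 ∣ orderOf (2 : ZMod p)) := by
    intro hdvd
    have : (3 : ℕ) ∣ p - 1 := hdvd.trans hdp
    omega
  have hcop : Nat.Coprime (orderOf (2 : ZMod p)) 3 := by
    exact (Nat.Prime.coprime_iff_not_dvd (by norm_num)).mpr h3nd |>.symm
  have hd2m : orderOf (2 : ZMod p) ∣ 2 * m := by
    have : orderOf (2 : ZMod p) ∣ 3 * (2 * m) := by
      rwa [show 3 * (2 * m) = 6 * m by ring]
    exact hcop.symm.symm.dvd_of_dvd_mul_left this
  have hfin : (2 : ZMod p) ^ (2 * m) = 1 := orderOf_dvd_iff_pow_eq_one.mp hd2m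
  rw [← ZMod.intCast_eq_intCast_iff]
  push_cast
  exact hfin
end
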